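/- For k = 1, 2 let (τ_{U,k}, φ_{U,k}, τ_{ε,k}) be real parameters with τ_{U,k} > 0, τ_{ε,k} > 0, and |φ_{U,k}| < 1, and define v_k : ℕ → ℝ by v_k(0) = τ_{U,k}⁻¹/(2√(1−φ_{U,k}²)) + τ_{ε,k}⁻¹ and v_k(l) = τ_{U,k}⁻¹·(1/(2√(1−φ_{U,k}²)))·(φ_{U,k}/(1+√(1−φ_{U,k}²)))^l for l ≥ 1. Then: (a) v_k(l) = 0 for all integers l ≥ 1 if and only if φ_{U,k} = 0; and (b) if φ_{U,1} ≠ 0, φ_{U,2} ≠ 0, and v_1(l) = v_2(l) for all l ∈ ℕ, then τ_{U,1} = τ_{U,2}, φ_{U,1} = φ_{U,2}, and τ_{ε,1} = τ_{ε,2}. -/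

import Mathlib

/-- The limiting value, as ring size `n → ∞`, of the entries at lag `l = |i - j|` of the
conditional covariance `Var[Y | Z] = τ_U⁻¹ • A_n(φ_U)⁻¹ + τ_ε⁻¹ • I_n` on the ring graph. -/
noncomputable def lagCov (τU τε φU : ℝ) : ℕ → ℝ := fun l =>
  if l = 0 then
    τU⁻¹ / (2 * Real.sqrt (1 - φU ^ 2)) + τε⁻¹
  else
    τU⁻¹ * (1 / (2 * Real.sqrt (1 - φU ^ 2))) *
      (φU / (1 + Real.sqrt (1 - φU ^ 2))) ^ l

lemma sqrt_pos_of_abs_lt (φ : ℝ) (h : |φ| < 1) : 0 < Real.sqrt (1 - φ ^ 2) := by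
  have : φ ^ 2 < 1 := by nlinarith [abs_nonneg φ, sq_abs φ]
  exact Real.sqrt_pos.2 (by linarith)

lemma phi_recover (φ : ℝ) (h : |φ| < 1) :
    2 * (φ / (1 + Real.sqrt (1 - φ ^ 2))) / (1 + (φ / (1 + Real.sqrt (1 - φ ^ 2))) ^ 2) = φ := by
  set s := Real.sqrt (1 - φ ^ 2) with hs
  have hspos : 0 < s := sqrt_pos_of_abs_lt φ h
  have hsq : s ^ 2 = 1 - φ ^ 2 := Real.sq_sqrt (by nlinarith [abs_nonneg φ, sq_abs φ])
  have h1s : (1 : ℝ) + s ≠ 0 := by positivity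
  have hden : 1 + (φ / (1 + s)) ^ 2 ≠ 0 := by positivity
  field_simp
  linear_combination (-φ) * hsq

lemma vanish_iff (τU τε φU : ℝ) (hτU : 0 < τU) (hφU : |φU| < 1) :
    (∀ l : ℕ, 1 ≤ l → lagCov τU τε φU l = 0) ↔ φU = 0 := by
  have hspos := sqrt_pos_of_abs_lt φU hφU
  constructor
  · intro h
    have h1 := h 1 le_rfl
    simp only [lagCov, if_neg (by norm_num : (1:ℕ) ≠ 0), pow_one] at h1
    have h1s : (0:ℝ) < 1 + Real.sqrt (1 - φU ^ 2) := by positivity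
    rcases mul_eq_zero.1 h1 with h2 | h2
    · rcases mul_eq_zero.1 h2 with h3 | h3
      · exact absurd h3 (by positivity)
      · exact absurd h3 (by positivity)
    · field_simp at h2
      exact h2.trans (mul_zero _)
  · intro h l hl
    simp only [lagCov, if_neg (Nat.one_le_iff_ne_zero.1 hl), h]
    simp [zero_pow (Nat.one_le_iff_ne_zero.1 hl)]

/-- Variance-parameter identification steps of Theorem 2: (a) the off-diagonal limiting
covariances vanish iff `φ_U = 0`; (b) if `φ_U ≠ 0`, then `(τ_U, φ_U, τ_ε)` are identified
by the limiting covariance lag function. -/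
theorem variance_parameters_identified
    (τU1 φU1 τε1 τU2 φU2 τε2 : ℝ)
    (hτU1 : 0 < τU1) (hτε1 : 0 < τε1) (hφU1 : |φU1| < 1)
    (hτU2 : 0 < τU2) (hτε2 : 0 < τε2) (hφU2 : |φU2| < 1) :
    ((∀ l : ℕ, 1 ≤ l → lagCov τU1 τε1 φU1 l = 0) ↔ φU1 = 0) ∧
    ((∀ l : ℕ, 1 ≤ l → lagCov τU2 τε2 φU2 l = 0) ↔ φU2 = 0) ∧
    (φU1 ≠ 0 → φU2 ≠ 0 → (∀ l : ℕ, lagCov τU1 τε1 φU1 l = lagCov τU2 τε2 φU2 l) →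
      τU1 = τU2 ∧ φU1 = φU2 ∧ τε1 = τε2) := by
  refine ⟨vanish_iff _ τε1 _ hτU1 hφU1, vanish_iff _ τε2 _ hτU2 hφU2, ?_⟩
  intro hφ1 hφ2 heq
  set s1 := Real.sqrt (1 - φU1 ^ 2) with hs1
  set s2 := Real.sqrt (1 - φU2 ^ 2) with hs2
  have hs1pos : 0 < s1 := sqrt_pos_of_abs_lt φU1 hφU1
  have hs2pos : 0 < s2 := sqrt_pos_of_abs_lt φU2 hφU2
  set r1 := φU1 / (1 + s1) with hr1
  set r2 := φU2 / (1 + s2) with hr2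
  set a1 := τU1⁻¹ * (1 / (2 * s1)) with ha1
  set a2 := τU2⁻¹ * (1 / (2 * s2)) with ha2
  have ha1pos : 0 < a1 := by positivity
  have ha2pos : 0 < a2 := by positivity
  have hr1ne : r1 ≠ 0 := by
    rw [hr1, div_ne_zero_iff]
    exact ⟨hφ1, by positivity⟩
  have hr2ne : r2 ≠ 0 := by
    rw [hr2, div_ne_zero_iff]
    exact ⟨hφ2, by positivity⟩
  have e1 : a1 * r1 = a2 * r2 := by
    have h := heq 1
    simp only [lagCov, if_neg (by norm_num : (1:ℕ) ≠ 0), pow_one] at h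
    rw [← hs1, ← hs2] at h
    rw [ha1, ha2, hr1, hr2]
    exact h
  have e2 : a1 * r1 ^ 2 = a2 * r2 ^ 2 := by
    have h := heq 2
    simp only [lagCov, if_neg (by norm_num : (2:ℕ) ≠ 0)] at h
    rw [← hs1, ← hs2] at h
    rw [ha1, ha2, hr1, hr2]
    exact h
  have hrr : r1 = r2 := by
    have h3 : a1 * r1 * r1 = a1 * r1 * r2 := by
      calc a1 * r1 * r1 = a1 * r1 ^ 2 := by ring
        _ = a2 * r2 ^ 2 := e2
        _ = (a2 * r2) * r2 := by ring
        _ = (a1 * r1) * r2 := by rw [e1]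
    exact mul_left_cancel₀ (mul_ne_zero (ne_of_gt ha1pos) hr1ne) h3
  have hφeq : φU1 = φU2 := by
    have p1 := phi_recover φU1 hφU1
    have p2 := phi_recover φU2 hφU2
    rw [← hs1, ← hr1] at p1
    rw [← hs2, ← hr2] at p2
    rw [← p1, ← p2, hrr]
  have hseq : s1 = s2 := by rw [hs1, hs2, hφeq]
  have haeq : a1 = a2 := by
    rw [hrr] at e1
    exact mul_right_cancel₀ hr2ne e1
  have hτUeq : τU1 = τU2 := by
    rw [ha1, ha2, hseq] at haeq
    have h2s : (1 : ℝ) / (2 * s2) ≠ 0 := by positivity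
    have := mul_right_cancel₀ h2s haeq
    exact inv_injective this
  refine ⟨hτUeq, hφeq, ?_⟩
  have h0 := heq 0
  simp only [lagCov, if_pos rfl, if_true] at h0
  rw [← hs1, ← hs2, hseq, hτUeq] at h0
  have : τε1⁻¹ = τε2⁻¹ := by linarith
  exact inv_injective this
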